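/- Let k_Σ be a positive semidefinite kernel on Σ, and let C_d ≥ 0 and C_hv ∈ ℝ. Then the path kernel k_p (defined recursively by k_p(s,t) = 0 if s or t empty, and k_p(s,t) = k_Σ(s₁,t₁) + C_hv·k_p(s_{2:},t) + C_hv·k_p(s,t_{2:}) + C_d·k_p(s_{2:},t_{2:}) otherwise) is a positive semidefinite kernel on the set of finite sequences over Σ. -/

import Mathlib

def IsPSDKernel {X : Type*} (k : X → X → ℝ) : Prop :=
  ∀ (n : ℕ) (x : Fin n → X) (c : Fin n → ℝ),
    0 ≤ ∑ i : Fin n, ∑ j : Fin n, c i * c j * k (x i) (x j)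

/-- The Path kernel, defined recursively (Eq. 4). -/
noncomputable def pathKernel {A : Type*} (kA : A → A → ℝ) (Chv Cd : ℝ) :
    List A → List A → ℝ
  | [], _ => 0
  | _ :: _, [] => 0
  | a :: s, b :: t =>
      kA a b + Chv * pathKernel kA Chv Cd s (b :: t)
        + Chv * pathKernel kA Chv Cd (a :: s) t
        + Cd * pathKernel kA Chv Cd s t
termination_by x y => x.length + y.length
decreasing_by all_goals (simp [List.length]; try omega)

open Finset

/-- Feature functions for the path-kernel coefficients: `φ k i = Chv^(i-k) * C(i,k)`. -/
noncomputable def phiP (Chv : ℝ) (k i : ℕ) : ℝ := Chv ^ (i - k) * (i.choose k : ℝ)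

/-- Coefficient of `kA s_i t_j` in the expansion of the path kernel. -/
noncomputable def wP (Chv Cd : ℝ) (i j : ℕ) : ℝ :=
  ∑ k ∈ range (i + 1), (Cd + Chv ^ 2) ^ k * phiP Chv k i * phiP Chv k j

lemma phiP_eq_zero (Chv : ℝ) {k i : ℕ} (h : i < k) : phiP Chv k i = 0 := by
  simp [phiP, Nat.choose_eq_zero_of_lt h]

lemma phiP_zero_succ (Chv : ℝ) (i : ℕ) : phiP Chv 0 (i + 1) = Chv * phiP Chv 0 i := by
  simp [phiP, pow_succ]; ring

lemma phiP_succ_succ (Chv : ℝ) (k i : ℕ) :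
    phiP Chv (k + 1) (i + 1) = Chv * phiP Chv (k + 1) i + phiP Chv k i := by
  rcases Nat.lt_or_ge k i with h | h
  · have h1 : i + 1 - (k + 1) = (i - (k + 1)) + 1 := by omega
    have h2 : i - k = (i - (k + 1)) + 1 := by omega
    simp only [phiP, Nat.choose_succ_succ, h1, h2, Nat.cast_add, pow_succ]
    ring
  · have h1 : i.choose (k + 1) = 0 := Nat.choose_eq_zero_of_lt (by omega)
    have h2 : i + 1 - (k + 1) = i - k := by omega
    simp only [phiP, Nat.choose_succ_succ, h1, h2, Nat.cast_add, Nat.cast_zero]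
    ring

lemma wP_eq_range (Chv Cd : ℝ) {i : ℕ} (j : ℕ) {N : ℕ} (h : i < N) :
    wP Chv Cd i j = ∑ k ∈ range N, (Cd + Chv ^ 2) ^ k * phiP Chv k i * phiP Chv k j := by
  apply Finset.sum_subset
  · intro k hk; simp only [mem_range] at *; omega
  · intro k _ hk
    simp only [mem_range, not_lt] at hk
    rw [phiP_eq_zero Chv (by omega : i < k)]
    ring

lemma wP_zero_zero (Chv Cd : ℝ) : wP Chv Cd 0 0 = 1 := by
  simp [wP, phiP]

lemma wP_zero_succ (Chv Cd : ℝ) (j : ℕ) : wP Chv Cd 0 (j + 1) = Chv * wP Chv Cd 0 j := by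
  simp [wP, phiP, pow_succ]; ring

lemma wP_succ_zero (Chv Cd : ℝ) (i : ℕ) : wP Chv Cd (i + 1) 0 = Chv * wP Chv Cd i 0 := by
  have h : ∀ m : ℕ, wP Chv Cd m 0 = Chv ^ m := by
    intro m
    rw [wP, Finset.sum_eq_single 0]
    · simp [phiP]
    · intro k _ hk
      have : (0 : ℕ) < k := Nat.pos_of_ne_zero hk
      rw [phiP_eq_zero Chv this]; ring
    · simp
  rw [h, h, pow_succ]; ring

/-- The key recurrence for the coefficients. -/
lemma wP_rec (Chv Cd : ℝ) (i j : ℕ) :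
    wP Chv Cd (i + 1) (j + 1) =
      Chv * wP Chv Cd i (j + 1) + Chv * wP Chv Cd (i + 1) j + Cd * wP Chv Cd i j := by
  set E := Cd + Chv ^ 2 with hE
  set δ : ℕ → ℝ := fun k => match k with | 0 => 0 | k + 1 => phiP Chv k i with hδ
  set ε : ℕ → ℝ := fun k => match k with | 0 => 0 | k + 1 => phiP Chv k j with hε
  have hu : ∀ k, phiP Chv k (i + 1) = Chv * phiP Chv k i + δ k := by
    intro k; cases k with
    | zero => simp [hδ, phiP_zero_succ]
    | succ k => simp [hδ, phiP_succ_succ]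
  have hv : ∀ k, phiP Chv k (j + 1) = Chv * phiP Chv k j + ε k := by
    intro k; cases k with
    | zero => simp [hε, phiP_zero_succ]
    | succ k => simp [hε, phiP_succ_succ]
  rw [wP_eq_range Chv Cd (j+1) (show i+1 < i+2 by omega),
      wP_eq_range Chv Cd (j+1) (show i < i+2 by omega),
      wP_eq_range Chv Cd j (show i+1 < i+2 by omega),
      wP_eq_range Chv Cd j (show i < i+2 by omega)]
  have hshift : ∑ k ∈ range (i + 2), E ^ k * (δ k * ε k)
      = ∑ k ∈ range (i + 2), E ^ (k + 1) * (phiP Chv k i * phiP Chv k j) := by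
    rw [Finset.sum_range_succ' (fun k => E ^ k * (δ k * ε k)) (i+1),
        Finset.sum_range_succ (fun k => E ^ (k+1) * (phiP Chv k i * phiP Chv k j)) (i+1)]
    simp [hδ, hε, phiP_eq_zero Chv (show i < i + 1 by omega)]
  have expand : ∀ k ∈ range (i + 2),
      E ^ k * phiP Chv k (i+1) * phiP Chv k (j+1)
      = (Chv * (E ^ k * phiP Chv k i * phiP Chv k (j+1))
          + Chv * (E ^ k * phiP Chv k (i+1) * phiP Chv k j)
          + Cd * (E ^ k * phiP Chv k i * phiP Chv k j))
        + (E ^ k * (δ k * ε k) - E ^ (k + 1) * (phiP Chv k i * phiP Chv k j)) := by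
    intro k _
    rw [hu k, hv k, hE]
    ring
  rw [Finset.sum_congr rfl expand]
  rw [Finset.sum_add_distrib, Finset.sum_sub_distrib, hshift]
  simp [Finset.sum_add_distrib, Finset.mul_sum]
  rw [hE]

/-- Explicit expansion of the path kernel. -/
lemma pathKernel_eq {A : Type*} (kA : A → A → ℝ) (Chv Cd : ℝ) :
    ∀ (s t : List A), pathKernel kA Chv Cd s t =
      ∑ i : Fin s.length, ∑ j : Fin t.length,
        wP Chv Cd i.val j.val * kA (s.get i) (t.get j) := by
  have H : ∀ (n : ℕ) (s t : List A), s.length + t.length = n →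
      pathKernel kA Chv Cd s t =
      ∑ i : Fin s.length, ∑ j : Fin t.length,
        wP Chv Cd i.val j.val * kA (s.get i) (t.get j) := by
    intro n
    induction n using Nat.strong_induction_on with
    | _ n ih =>
      intro s t hn
      match s, t with
      | [], t => rw [pathKernel]; simp
      | a :: s, [] => rw [pathKernel]; simp
      | a :: s, b :: t =>
        rw [pathKernel]
        rw [ih (s.length + (b::t).length) (by simp at hn ⊢; omega) s (b::t) rfl,
            ih ((a::s).length + t.length) (by simp at hn ⊢; omega) (a::s) t rfl,
            ih (s.length + t.length) (by simp at hn ⊢; omega) s t rfl]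
        simp only [List.length_cons, Fin.sum_univ_succ, List.get_cons_succ, Fin.val_succ,
          Fin.val_zero, List.get_cons_zero]
        simp only [wP_rec, wP_zero_succ, wP_succ_zero, wP_zero_zero]
        simp only [List.get_cons_succ']
        simp only [mul_add, add_mul, one_mul, mul_assoc, Finset.sum_add_distrib,
          Finset.mul_sum]
        ring
  intro s t
  exact H (s.length + t.length) s t rfl

/-- Rotating the innermost sum of a triple sum to the outside. -/
lemma sum_rot {ι κ μ : Type*} (s : Finset ι) (t : Finset κ) (u : Finset μ)
    (f : ι → κ → μ → ℝ) :
    ∑ i ∈ s, ∑ j ∈ t, ∑ k ∈ u, f i j k = ∑ k ∈ u, ∑ i ∈ s, ∑ j ∈ t, f i j k :=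
  calc ∑ i ∈ s, ∑ j ∈ t, ∑ k ∈ u, f i j k
      = ∑ i ∈ s, ∑ k ∈ u, ∑ j ∈ t, f i j k :=
        Finset.sum_congr rfl fun _ _ => Finset.sum_comm
    _ = ∑ k ∈ u, ∑ i ∈ s, ∑ j ∈ t, f i j k := Finset.sum_comm

/-- Flattened PSD property: quadratic forms over the symbols of a family of lists. -/
lemma flat_psd {A : Type*} (kA : A → A → ℝ) (hA : IsPSDKernel kA) {n : ℕ}
    (x : Fin n → List A) (d : (a : Fin n) → Fin (x a).length → ℝ) :
    0 ≤ ∑ a : Fin n, ∑ b : Fin n, ∑ i : Fin (x a).length, ∑ j : Fin (x b).length,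
        d a i * d b j * kA ((x a).get i) ((x b).get j) := by
  set T := (a : Fin n) × Fin (x a).length with hT
  let e : Fin (Fintype.card T) ≃ T := (Fintype.equivFin T).symm
  have h := hA (Fintype.card T) (fun m => (x (e m).1).get (e m).2)
      (fun m => d (e m).1 (e m).2)
  have h2 : ∀ (F : T → ℝ), ∑ m : Fin (Fintype.card T), F (e m) = ∑ t : T, F t :=
    fun F => Equiv.sum_comp e F
  calc (0:ℝ) ≤ ∑ m, ∑ m', d (e m).1 (e m).2 * d (e m').1 (e m').2 *
        kA ((x (e m).1).get (e m).2) ((x (e m').1).get (e m').2) := h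
    _ = ∑ t : T, ∑ t' : T, d t.1 t.2 * d t'.1 t'.2 *
        kA ((x t.1).get t.2) ((x t'.1).get t'.2) := by
        rw [h2 (fun t => ∑ m', d t.1 t.2 * d (e m').1 (e m').2 *
          kA ((x t.1).get t.2) ((x (e m').1).get (e m').2))]
        exact Finset.sum_congr rfl fun t _ => h2 (fun t' => d t.1 t.2 * d t'.1 t'.2 *
          kA ((x t.1).get t.2) ((x t'.1).get t'.2))
    _ = ∑ a : Fin n, ∑ i : Fin (x a).length, ∑ b : Fin n, ∑ j : Fin (x b).length,
        d a i * d b j * kA ((x a).get i) ((x b).get j) := by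
        rw [← Finset.univ_sigma_univ, Finset.sum_sigma]
        exact Finset.sum_congr rfl fun a _ => Finset.sum_congr rfl fun i _ => by
          rw [Finset.sum_sigma]
    _ = ∑ a : Fin n, ∑ b : Fin n, ∑ i : Fin (x a).length, ∑ j : Fin (x b).length,
        d a i * d b j * kA ((x a).get i) ((x b).get j) :=
        Finset.sum_congr rfl fun a _ => Finset.sum_comm

/-- Corollary 2 (main result): the Path kernel is positive semidefinite for
any PSD symbol kernel `k_Σ`, any `C_d ≥ 0` and any `C_hv ∈ ℝ`. -/
theorem pathKernel_is_psd {A : Type*} (kA : A → A → ℝ) (hA : IsPSDKernel kA)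
    (Chv Cd : ℝ) (hCd : 0 ≤ Cd) :
    IsPSDKernel (pathKernel kA Chv Cd) := by
  intro n x c
  set K := Finset.univ.sup (fun a : Fin n => (x a).length) with hKdef
  have hK : ∀ (a : Fin n) (i : Fin (x a).length), (i : ℕ) < K :=
    fun a i => lt_of_lt_of_le i.isLt (by rw [hKdef]; exact Finset.le_sup (f := fun a : Fin n => (x a).length) (Finset.mem_univ a))
  have hE : (0:ℝ) ≤ Cd + Chv ^ 2 := by positivity
  have main_eq : ∑ a : Fin n, ∑ b : Fin n, c a * c b * pathKernel kA Chv Cd (x a) (x b)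
      = ∑ k ∈ Finset.range K, (Cd + Chv ^ 2) ^ k *
          (∑ a : Fin n, ∑ b : Fin n, ∑ i : Fin (x a).length, ∑ j : Fin (x b).length,
            (c a * phiP Chv k i) * (c b * phiP Chv k j) *
              kA ((x a).get i) ((x b).get j)) := by
    calc ∑ a : Fin n, ∑ b : Fin n, c a * c b * pathKernel kA Chv Cd (x a) (x b)
        = ∑ a : Fin n, ∑ b : Fin n, ∑ k ∈ Finset.range K, (Cd + Chv ^ 2) ^ k *
            (∑ i : Fin (x a).length, ∑ j : Fin (x b).length,
              (c a * phiP Chv k i) * (c b * phiP Chv k j) *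
                kA ((x a).get i) ((x b).get j)) := by
          refine Finset.sum_congr rfl fun a _ => Finset.sum_congr rfl fun b _ => ?_
          rw [pathKernel_eq]
          calc c a * c b * (∑ i : Fin (x a).length, ∑ j : Fin (x b).length,
                wP Chv Cd i.val j.val * kA ((x a).get i) ((x b).get j))
              = ∑ i : Fin (x a).length, ∑ j : Fin (x b).length,
                  ∑ k ∈ Finset.range K, (Cd + Chv ^ 2) ^ k *
                    ((c a * phiP Chv k i) * (c b * phiP Chv k j) *
                      kA ((x a).get i) ((x b).get j)) := by
                simp only [Finset.mul_sum]
                refine Finset.sum_congr rfl fun i _ => Finset.sum_congr rfl fun j _ => ?_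
                rw [wP_eq_range Chv Cd j.val (hK a i), Finset.sum_mul, Finset.mul_sum]
                exact Finset.sum_congr rfl fun k _ => by ring
            _ = ∑ k ∈ Finset.range K, ∑ i : Fin (x a).length, ∑ j : Fin (x b).length,
                  (Cd + Chv ^ 2) ^ k *
                    ((c a * phiP Chv k i) * (c b * phiP Chv k j) *
                      kA ((x a).get i) ((x b).get j)) := sum_rot _ _ _ _
            _ = ∑ k ∈ Finset.range K, (Cd + Chv ^ 2) ^ k *
                  (∑ i : Fin (x a).length, ∑ j : Fin (x b).length,
                    (c a * phiP Chv k i) * (c b * phiP Chv k j) *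
                      kA ((x a).get i) ((x b).get j)) := by
                refine Finset.sum_congr rfl fun k _ => ?_
                simp only [Finset.mul_sum]
      _ = ∑ k ∈ Finset.range K, ∑ a : Fin n, ∑ b : Fin n, (Cd + Chv ^ 2) ^ k *
            (∑ i : Fin (x a).length, ∑ j : Fin (x b).length,
              (c a * phiP Chv k i) * (c b * phiP Chv k j) *
                kA ((x a).get i) ((x b).get j)) := sum_rot _ _ _ _
      _ = ∑ k ∈ Finset.range K, (Cd + Chv ^ 2) ^ k *
            (∑ a : Fin n, ∑ b : Fin n, ∑ i : Fin (x a).length, ∑ j : Fin (x b).length,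
              (c a * phiP Chv k i) * (c b * phiP Chv k j) *
                kA ((x a).get i) ((x b).get j)) := by
          refine Finset.sum_congr rfl fun k _ => ?_
          simp only [Finset.mul_sum]
  rw [main_eq]
  refine Finset.sum_nonneg fun k _ => mul_nonneg (pow_nonneg hE k) ?_
  exact flat_psd kA hA x (fun a i => c a * phiP Chv k i)
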